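/- The scoring function S(x,y) = y(φ(y) − φ(x)) − y(y−x)φ'(x), with φ convex with subgradient φ', is consistent for the functional T(F) = E_F[Y²]/E_F[Y] on the positive half-axis; in particular both the squared relative error S(x,y) = (x−y)²/x² (via φ(y)=1/y) and S(x,y) = y(x−y)² (via φ(y)=y²) have T(F) = E_F[Y²]/E_F[Y] as optimal point forecast. -/

import Mathlib

open MeasureTheory Set

lemma key_score_ineq (φ φ' : ℝ → ℝ)
    (hsub : ∀ x ∈ Ioi (0:ℝ), ∀ y ∈ Ioi (0:ℝ), φ x + φ' x * (y - x) ≤ φ y)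
    (F : Measure ℝ) [IsProbabilityMeasure F] (hFI : ∀ᵐ y ∂F, y ∈ Ioi (0:ℝ))
    (hint1 : MemLp (fun y => y) 2 F)
    (hint2 : Integrable (fun y => y * φ y) F)
    (t x : ℝ) (ht : 0 < t) (hx : 0 < x)
    (hM2 : (∫ y, y ^ 2 ∂F) = t * ∫ y, y ∂F) :
    ∫ y, (y * (φ y - φ t) - y * (y - t) * φ' t) ∂F
      ≤ ∫ y, (y * (φ y - φ x) - y * (y - x) * φ' x) ∂F := by
  have hy : Integrable (fun y => y) F := hint1.integrable (by norm_num)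
  have hy2 : Integrable (fun y => y ^ 2) F := by
    have := hint1.integrable_sq
    simpa using this
  have expand : ∀ z : ℝ, ∫ y, (y * (φ y - φ z) - y * (y - z) * φ' z) ∂F =
      (∫ y, y * φ y ∂F) - φ z * (∫ y, y ∂F)
        - φ' z * ((∫ y, y ^ 2 ∂F) - z * (∫ y, y ∂F)) := by
    intro z
    have heq : (fun y => y * (φ y - φ z) - y * (y - z) * φ' z) =
        fun y => y * φ y - (φ z * y + φ' z * (y ^ 2 - z * y)) := by
      funext y; ring
    have i1 : Integrable (fun y => φ' z * (y ^ 2 - z * y)) F :=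
      Integrable.const_mul (hy2.sub (hy.const_mul z)) _
    have i2 : Integrable (fun y => φ z * y + φ' z * (y ^ 2 - z * y)) F :=
      (hy.const_mul _).add i1
    rw [heq, integral_sub hint2 i2, integral_add (hy.const_mul _) i1,
      integral_const_mul, integral_const_mul, integral_sub hy2 (hy.const_mul z),
      integral_const_mul]
    ring
  rw [expand t, expand x, hM2]
  have hM1 : 0 ≤ ∫ y, y ∂F := integral_nonneg_of_ae (hFI.mono fun y hy => le_of_lt hy)
  have hs := hsub x hx t ht
  nlinarith [mul_le_mul_of_nonneg_right hs hM1]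

lemma integrable_y (F : Measure ℝ) [IsProbabilityMeasure F]
    (hint1 : MemLp (fun y : ℝ => y) 2 F) : Integrable (fun y => y) F :=
  hint1.integrable (by norm_num)

lemma integrable_ysq (F : Measure ℝ) [IsProbabilityMeasure F]
    (hint1 : MemLp (fun y : ℝ => y) 2 F) : Integrable (fun y => y ^ 2) F := by
  have := hint1.integrable_sq
  simpa using this

/-- The scoring function `S(x,y) = y(φ(y) − φ(x)) − y(y−x)φ'(x)` is consistent
for the functional `T(F) = E_F[Y²]/E_F[Y]` on the positive half-axis; in
particular, both the squared relative error `(x−y)²/x²` (via `φ(y) = 1/y`) and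
`y(x−y)²` (via `φ(y) = y²`) have `T(F)` as an optimal point forecast. -/
theorem consistency_for_second_moment_ratio
    (φ φ' : ℝ → ℝ) (hconv : ConvexOn ℝ (Ioi (0:ℝ)) φ)
    (hsub : ∀ x ∈ Ioi (0:ℝ), ∀ y ∈ Ioi (0:ℝ), φ x + φ' x * (y - x) ≤ φ y)
    (F : Measure ℝ) [IsProbabilityMeasure F] (hFI : ∀ᵐ y ∂F, y ∈ Ioi (0:ℝ))
    (hint1 : MemLp (fun y => y) 2 F)
    (hint2 : Integrable (fun y => y * φ y) F)
    (hint3 : Integrable (fun y => y ^ 2 * φ' y) F)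
    (hTI : (∫ y, y ^ 2 ∂F) / (∫ y, y ∂F) ∈ Ioi (0:ℝ)) :
    (∀ x ∈ Ioi (0:ℝ),
      ∫ y, (y * (φ y - φ ((∫ y, y ^ 2 ∂F) / (∫ y, y ∂F))) -
            y * (y - (∫ y, y ^ 2 ∂F) / (∫ y, y ∂F)) *
              φ' ((∫ y, y ^ 2 ∂F) / (∫ y, y ∂F))) ∂F
        ≤ ∫ y, (y * (φ y - φ x) - y * (y - x) * φ' x) ∂F) ∧
    (∀ x ∈ Ioi (0:ℝ),
      ∫ y, (((∫ y, y ^ 2 ∂F) / (∫ y, y ∂F)) - y) ^ 2 /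
            ((∫ y, y ^ 2 ∂F) / (∫ y, y ∂F)) ^ 2 ∂F
        ≤ ∫ y, (x - y) ^ 2 / x ^ 2 ∂F) ∧
    (∀ x ∈ Ioi (0:ℝ),
      ∫ y, y * (((∫ y, y ^ 2 ∂F) / (∫ y, y ∂F)) - y) ^ 2 ∂F
        ≤ ∫ y, y * (x - y) ^ 2 ∂F) := by
  have ht : (0:ℝ) < (∫ y, y ^ 2 ∂F) / (∫ y, y ∂F) := hTI
  have hM1ne : (∫ y, y ∂F) ≠ 0 := by
    intro h
    rw [h, div_zero] at ht
    exact lt_irrefl 0 ht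
  have hM2 : (∫ y, y ^ 2 ∂F) = ((∫ y, y ^ 2 ∂F) / (∫ y, y ∂F)) * ∫ y, y ∂F :=
    (div_mul_cancel₀ _ hM1ne).symm
  have hy : Integrable (fun y => y) F := integrable_y F hint1
  have hy2 : Integrable (fun y => y ^ 2) F := integrable_ysq F hint1
  set c := (∫ y, y ^ 2 ∂F) / (∫ y, y ∂F) with hc
  refine ⟨fun x hx => key_score_ineq φ φ' hsub F hFI hint1 hint2 c x ht hx hM2,
    fun x hx => ?_, fun x hx => ?_⟩
  · -- squared relative error
    rw [mem_Ioi] at hx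
    have hsub2 : ∀ a ∈ Ioi (0:ℝ), ∀ b ∈ Ioi (0:ℝ),
        a⁻¹ + (-(a ^ 2)⁻¹) * (b - a) ≤ b⁻¹ := by
      intro a ha b hb
      rw [mem_Ioi] at ha hb
      rw [← sub_nonneg]
      have h : b⁻¹ - (a⁻¹ + -(a ^ 2)⁻¹ * (b - a)) = (a - b) ^ 2 / (a ^ 2 * b) := by
        field_simp
        ring
      rw [h]
      positivity
    have hi2 : Integrable (fun y => y * y⁻¹) F :=
      (integrable_const (1:ℝ)).congr (hFI.mono fun y hy => (mul_inv_cancel₀ (ne_of_gt hy)).symm)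
    have hkey := key_score_ineq (fun y => y⁻¹) (fun y => -(y ^ 2)⁻¹) hsub2 F hFI hint1 hi2
      c x ht hx hM2
    have hconv2 : ∀ z : ℝ, 0 < z →
        (∫ y, (y * (y⁻¹ - z⁻¹) - y * (y - z) * (-(z ^ 2)⁻¹)) ∂F)
          = ∫ y, (z - y) ^ 2 / z ^ 2 ∂F := by
      intro z hz
      refine integral_congr_ae (hFI.mono fun y hy => ?_)
      rw [mem_Ioi] at hy
      field_simp
      ring
    rw [hconv2 c ht, hconv2 x hx] at hkey
    exact hkey
  · -- y (x − y)²
    rw [mem_Ioi] at hx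
    by_cases hcube : Integrable (fun y => y ^ 3) F
    · have hi3 : Integrable (fun y => y * y ^ 2) F :=
        hcube.congr (Filter.Eventually.of_forall fun y => by ring)
      have hsub3 : ∀ a ∈ Ioi (0:ℝ), ∀ b ∈ Ioi (0:ℝ),
          a ^ 2 + (2 * a) * (b - a) ≤ b ^ 2 := by
        intro a _ b _
        nlinarith [sq_nonneg (a - b)]
      have hkey := key_score_ineq (fun y => y ^ 2) (fun y => 2 * y) hsub3 F hFI hint1 hi3
        c x ht hx hM2
      have hconv3 : ∀ z : ℝ,
          (∫ y, (y * (y ^ 2 - z ^ 2) - y * (y - z) * (2 * z)) ∂F)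
            = ∫ y, y * (z - y) ^ 2 ∂F := by
        intro z
        refine integral_congr_ae (Filter.Eventually.of_forall fun y => ?_)
        ring
      rw [hconv3 c, hconv3 x] at hkey
      exact hkey
    · have hn : ∀ z : ℝ, ¬ Integrable (fun y => y * (z - y) ^ 2) F := by
        intro z hI
        apply hcube
        have h : (fun y : ℝ => y ^ 3) =
            fun y => y * (z - y) ^ 2 + (2 * z) * y ^ 2 - z ^ 2 * y := by
          funext y; ring
        rw [h]
        exact (hI.add (hy2.const_mul _)).sub (hy.const_mul _)
      rw [integral_undef (hn c), integral_undef (hn x)]
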